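/- Let c > 0 with 1/c an integer, let ℓ ≥ 1 be an integer, define r = 2 + 1/c, K = r^ℓ − 1, k = r^{ℓ−1} − 1. Let ε > 0 and let G be an ε-sparse (ε|G|^{1−c}, ε|G|)-coherent graph. Let B_0, B_1, …, B_K be pairwise disjoint subsets of V(G), with B_0 nonempty and |B_i| ≥ r^{2ℓ}·ε|G| for 1 ≤ i ≤ K. Then either (a) there is an induced path of G with vertices p_0, p_1, …, p_ℓ in order and indices 1 ≤ t_1 < t_2 < ⋯ < t_ℓ ≤ K such that p_0 ∈ B_0 and p_i ∈ B_{t_i} for 1 ≤ i ≤ ℓ; or (b) |B_0| ≤ K·ε|G|^{1−c}, and there exist sets C_1, …, C_{K−k} with union B_0 such that for each i ∈ {1, …, K−k} and each j with i ≤ j ≤ i+k, at least r^{2ℓ−2}·ε|G| vertices of B_j have no neighbour in C_i. -/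

import Mathlib

open Finset

section helpers

variable {V : Type} [Fintype V] [DecidableEq V]

def PathConc (G : SimpleGraph V) (ℓ K : ℕ) (B : ℕ → Finset V) : Prop :=
  ∃ (p : ℕ → V) (t : ℕ → ℕ),
      (∀ i ≤ ℓ, ∀ j ≤ ℓ, (G.Adj (p i) (p j) ↔ (i = j + 1 ∨ j = i + 1))) ∧
      (∀ i ≤ ℓ, ∀ j ≤ ℓ, p i = p j → i = j) ∧
      (∀ i, 1 ≤ i → i < ℓ → t i < t (i + 1)) ∧
      1 ≤ t 1 ∧ t ℓ ≤ K ∧ p 0 ∈ B 0 ∧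
      (∀ i, 1 ≤ i → i ≤ ℓ → p i ∈ B (t i))

def CovConc (G : SimpleGraph V) [DecidableRel G.Adj] (c ε : ℝ) (r ℓ K k : ℕ)
    (B : ℕ → Finset V) : Prop :=
  ((B 0).card : ℝ) ≤ (K : ℝ) * ε * (Fintype.card V : ℝ) ^ (1 - c) ∧
      ∃ C : ℕ → Finset V,
        B 0 = (Finset.Icc 1 (K - k)).biUnion C ∧
        ∀ i, 1 ≤ i → i ≤ K - k → ∀ j, i ≤ j → j ≤ i + k →
          ((r : ℝ) ^ (2 * ℓ - 2)) * ε * Fintype.card V ≤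
            (((B j).filter (fun v => ∀ u ∈ C i, ¬ G.Adj u v)).card : ℝ)

lemma mono_of_local {t : ℕ → ℕ} {L : ℕ} (h : ∀ i, 1 ≤ i → i < L → t i < t (i + 1)) :
    ∀ a b, 1 ≤ a → a ≤ b → b ≤ L → t a ≤ t b := by
  intro a b h1 hab hbL
  induction b, hab using Nat.le_induction with
  | base => exact le_rfl
  | succ b hab ih =>
      have hb : b ≤ L := by omega
      exact le_trans (ih (by omega)) (le_of_lt (h b (by omega) (by omega)))

lemma two_path (G : SimpleGraph V) (K : ℕ) (B : ℕ → Finset V)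
    (v u : V) (t : ℕ) (ht1 : 1 ≤ t) (htK : t ≤ K)
    (hv : v ∈ B 0) (hu : u ∈ B t) (hadj : G.Adj v u) :
    PathConc G 1 K B := by
  refine ⟨fun i => if i = 0 then v else u, fun _ => t, ?_, ?_, ?_, ht1, htK, by simp [hv], ?_⟩
  · intro i hi j hj
    interval_cases i <;> interval_cases j <;> simp
    · exact hadj
    · exact hadj.symm
  · intro i hi j hj
    interval_cases i <;> interval_cases j <;> simp
    · exact G.ne_of_adj hadj
    · exact (G.ne_of_adj hadj).symm
  · intro i h1 h2; omega
  · intro i h1 h2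
    interval_cases i
    simpa using hu

/-- The prepending construction. -/
lemma prepend_path (G : SimpleGraph V) [DecidableRel G.Adj]
    (L K k j : ℕ) (hL1 : 1 ≤ L) (hj1 : 1 ≤ j) (hjk : j + k ≤ K)
    (B : ℕ → Finset V) (S : Finset V) (hSB0 : S ⊆ B 0)
    (hdisj : ∀ i j, i ≤ K → j ≤ K → i ≠ j → Disjoint (B i) (B j))
    (hpathL : PathConc G L k
      (fun m => if m = 0 then (B j).filter (fun x => ∃ u ∈ S, G.Adj u x)
        else (B (j + m)).filter (fun x => ∀ u ∈ S, ¬ G.Adj u x))) :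
    PathConc G (L + 1) K B := by
  classical
  obtain ⟨p', t', hadj', hinj', hmono', ht1', htl', hp0', hmem'⟩ := hpathL
  simp only [↓reduceIte, mem_filter] at hp0'
  obtain ⟨hp0B, v, hvS, hvadj⟩ := hp0'
  have htlow : ∀ i', 1 ≤ i' → i' ≤ L → 1 ≤ t' i' :=
    fun i' h1 h2 => le_trans ht1' (mono_of_local hmono' 1 i' le_rfl h1 h2)
  have hthigh : ∀ i', 1 ≤ i' → i' ≤ L → t' i' ≤ k :=
    fun i' h1 h2 => le_trans (mono_of_local hmono' i' L h1 h2 le_rfl) htl'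
  have hmem2 : ∀ i', 1 ≤ i' → i' ≤ L →
      p' i' ∈ (B (j + t' i')).filter (fun x => ∀ u ∈ S, ¬ G.Adj u x) := by
    intro i' h1 h2
    have := hmem' i' h1 h2
    have hne : t' i' ≠ 0 := by have := htlow i' h1 h2; omega
    simpa [hne] using this
  have hmemB : ∀ i', 1 ≤ i' → i' ≤ L → p' i' ∈ B (j + t' i') :=
    fun i' h1 h2 => (mem_filter.1 (hmem2 i' h1 h2)).1
  have hnoadj : ∀ i', 1 ≤ i' → i' ≤ L → ∀ u ∈ S, ¬ G.Adj u (p' i') :=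
    fun i' h1 h2 => (mem_filter.1 (hmem2 i' h1 h2)).2
  refine ⟨fun i => if i = 0 then v else p' (i - 1),
          fun i => if i ≤ 1 then j else j + t' (i - 1), ?_, ?_, ?_, ?_, ?_, ?_, ?_⟩
  · -- adjacency iff
    intro i hi jj hjj
    beta_reduce
    rcases Nat.eq_zero_or_pos i with hi0 | hip <;> rcases Nat.eq_zero_or_pos jj with hj0 | hjp
    · subst hi0; subst hj0
      simp only [↓reduceIte]
      exact iff_of_false (G.irrefl) (by omega)
    · subst hi0
      simp only [↓reduceIte, if_neg (by omega : ¬ jj = 0)]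
      by_cases hjj1 : jj = 1
      · subst hjj1
        simp only [show (1:ℕ) - 1 = 0 from rfl]
        exact iff_of_true hvadj (by simp)
      · exact iff_of_false (hnoadj (jj-1) (by omega) (by omega) v hvS) (by omega)
    · subst hj0
      simp only [↓reduceIte, if_neg (by omega : ¬ i = 0)]
      rw [G.adj_comm]
      by_cases hii1 : i = 1
      · subst hii1
        simp only [show (1:ℕ) - 1 = 0 from rfl]
        exact iff_of_true hvadj (by simp)
      · exact iff_of_false (hnoadj (i-1) (by omega) (by omega) v hvS) (by omega)
    · simp only [if_neg (by omega : ¬ i = 0), if_neg (by omega : ¬ jj = 0)]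
      have h := hadj' (i-1) (by omega) (jj-1) (by omega)
      refine h.trans ?_
      constructor <;> intro h' <;> omega
  · -- injectivity
    intro i hi jj hjj
    beta_reduce
    rcases Nat.eq_zero_or_pos i with hi0 | hip <;> rcases Nat.eq_zero_or_pos jj with hj0 | hjp
    · omega
    · subst hi0
      simp only [↓reduceIte, if_neg (by omega : ¬ jj = 0)]
      intro hEq
      exfalso
      have hvB0 : v ∈ B 0 := hSB0 hvS
      rcases eq_or_lt_of_le (show 1 ≤ jj from hjp) with h1 | h2
      · have : p' (jj - 1) ∈ B j := by rw [← h1]; simpa using hp0B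
        have hd := hdisj 0 j (by omega) (by omega) (by omega)
        exact (Finset.disjoint_left.1 hd hvB0) (hEq ▸ this)
      · have hmem := hmemB (jj-1) (by omega) (by omega)
        have hd := hdisj 0 (j + t' (jj-1)) (by omega)
          (by have := hthigh (jj-1) (by omega) (by omega); omega) (by omega)
        exact (Finset.disjoint_left.1 hd hvB0) (hEq ▸ hmem)
    · subst hj0
      simp only [↓reduceIte, if_neg (by omega : ¬ i = 0)]
      intro hEq
      exfalso
      have hvB0 : v ∈ B 0 := hSB0 hvS
      rcases eq_or_lt_of_le (show 1 ≤ i from hip) with h1 | h2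
      · have : p' (i - 1) ∈ B j := by rw [← h1]; simpa using hp0B
        have hd := hdisj 0 j (by omega) (by omega) (by omega)
        exact (Finset.disjoint_left.1 hd hvB0) (hEq ▸ this)
      · have hmem := hmemB (i-1) (by omega) (by omega)
        have hd := hdisj 0 (j + t' (i-1)) (by omega)
          (by have := hthigh (i-1) (by omega) (by omega); omega) (by omega)
        exact (Finset.disjoint_left.1 hd hvB0) (hEq ▸ hmem)
    · simp only [if_neg (by omega : ¬ i = 0), if_neg (by omega : ¬ jj = 0)]
      intro hEq
      have := hinj' (i-1) (by omega) (jj-1) (by omega) hEq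
      omega
  · -- monotone
    intro i h1 h2
    beta_reduce
    by_cases hi1 : i = 1
    · subst hi1
      rw [if_pos (le_refl 1), if_neg (show ¬ 1 + 1 ≤ 1 by omega),
        show (1 + 1 - 1 : ℕ) = 1 from rfl]
      have := ht1'
      omega
    · have hi1' : ¬ i ≤ 1 := by omega
      have hi2' : ¬ i + 1 ≤ 1 := by omega
      rw [if_neg hi1', if_neg hi2']
      have hmm := hmono' (i-1) (by omega) (by omega)
      have heq : i - 1 + 1 = i + 1 - 1 := by omega
      rw [heq] at hmm
      omega
  · beta_reduce
    rw [if_pos (le_refl 1)]; exact hj1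
  · beta_reduce
    have : ¬ (L + 1) ≤ 1 := by omega
    rw [if_neg this]
    have := htl' ; have h2 : L + 1 - 1 = L := by omega
    rw [h2]
    omega
  · beta_reduce
    rw [if_pos rfl]; exact hSB0 hvS
  · intro i h1 h2
    beta_reduce
    by_cases hi1 : i = 1
    · subst hi1
      rw [if_neg (by omega : ¬ (1:ℕ) = 0), if_pos (le_refl 1),
        show (1 - 1 : ℕ) = 0 from rfl]
      exact hp0B
    · rw [if_neg (by omega : ¬ i = 0), if_neg (by omega : ¬ i ≤ 1)]
      exact hmemB (i-1) (by omega) (by omega)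

end helpers

section main

variable {V : Type} [Fintype V] [DecidableEq V]

set_option maxHeartbeats 2000000 in
theorem pathfinder_aux (G : SimpleGraph V) [DecidableRel G.Adj]
    (c : ℝ) (hc : 0 < c) (r : ℕ) (hr : (r : ℝ) = 2 + 1 / c)
    (ε : ℝ) (hε0 : 0 < ε)
    (hsparse : ∀ v : V, (G.degree v : ℝ) < ε * Fintype.card V)
    (hcoherent : ¬ ∃ A B : Finset V, Disjoint A B ∧
      (∀ a ∈ A, ∀ b ∈ B, ¬ G.Adj a b) ∧
      ε * (Fintype.card V : ℝ) ^ (1 - c) ≤ (A.card : ℝ) ∧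
      ε * Fintype.card V ≤ (B.card : ℝ)) :
    ∀ ℓ, 1 ≤ ℓ → ∀ K k (B : ℕ → Finset V),
      K = r ^ ℓ - 1 → k = r ^ (ℓ - 1) - 1 →
      (∀ i j, i ≤ K → j ≤ K → i ≠ j → Disjoint (B i) (B j)) →
      (B 0).Nonempty →
      (∀ i, 1 ≤ i → i ≤ K → ((r : ℝ) ^ (2 * ℓ)) * ε * Fintype.card V ≤ ((B i).card : ℝ)) →
      PathConc G ℓ K B ∨ CovConc G c ε r ℓ K k B := by
  -- global numeric facts
  have hr3 : 3 ≤ r := by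
    by_contra h
    have h2 : (r : ℝ) ≤ 2 := by exact_mod_cast (by omega : r ≤ 2)
    have : 0 < 1 / c := by positivity
    linarith [hr]
  have hrR : (1:ℝ) ≤ (r:ℝ) := by exact_mod_cast (by omega : 1 ≤ r)
  intro ℓ
  induction ℓ with
  | zero => intro h; omega
  | succ L ih =>
      intro _ K k B hK hk hdisj hB0 hBi
      obtain ⟨v0, hv0⟩ := hB0
      have hV : Nonempty V := ⟨v0⟩
      have hn1 : (1:ℝ) ≤ (Fintype.card V : ℝ) := by exact_mod_cast Fintype.card_pos
      set n : ℝ := (Fintype.card V : ℝ) with hn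
      have hn0 : (0:ℝ) < n := by linarith
      have hεn : (0:ℝ) < ε * n := by positivity
      have hx0 : (0:ℝ) < ε * n ^ (1 - c) := by positivity
      by_cases hpath : PathConc G (L+1) K B
      · exact Or.inl hpath
      refine Or.inr ?_
      rcases Nat.eq_zero_or_pos L with hL0 | hL1
      · -- ℓ = 1 base case
        subst hL0
        have hk0 : k = 0 := by simp at hk; omega
        have hK2 : 2 ≤ K := by
          have h : r ^ (0+1) = r := by norm_num
          omega
        have anticom : ∀ t, 1 ≤ t → t ≤ K → ∀ v ∈ B 0, ∀ u ∈ B t, ¬ G.Adj v u := by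
          intro t h1 h2 v hv u hu hadj
          exact hpath (two_path G K B v u t h1 h2 hv hu hadj)
        have hblock : ∀ j, 1 ≤ j → j ≤ K → ε * n ≤ ((B j).card : ℝ) := by
          intro j h1 h2
          have := hBi j h1 h2
          have h1r : (1:ℝ) ≤ (r:ℝ) ^ (2*1) := one_le_pow₀ hrR
          nlinarith
        constructor
        · by_cases hbig : ε * n ^ (1 - c) ≤ ((B 0).card : ℝ)
          · exfalso
            apply hcoherent
            refine ⟨B 0, B 1, hdisj 0 1 (by omega) (by omega) (by omega), ?_, hbig,
              hblock 1 le_rfl (by omega)⟩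
            intro a ha b hb
            exact anticom 1 le_rfl (by omega) a ha b hb
          · push_neg at hbig
            have hK1 : (1:ℝ) ≤ (K:ℝ) := by exact_mod_cast (by omega : 1 ≤ K)
            calc ((B 0).card : ℝ) ≤ ε * n ^ (1-c) := le_of_lt hbig
              _ = 1 * (ε * n ^ (1-c)) := by ring
              _ ≤ (K:ℝ) * (ε * n ^ (1-c)) := by
                  apply mul_le_mul_of_nonneg_right hK1 (le_of_lt hx0)
              _ = (K:ℝ) * ε * n ^ (1-c) := by ring
        · refine ⟨fun _ => B 0, ?_, ?_⟩
          · ext x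
            simp only [mem_biUnion, mem_Icc]
            constructor
            · intro hx; exact ⟨1, ⟨le_rfl, by omega⟩, hx⟩
            · rintro ⟨i, _, hx⟩; exact hx
          · intro i hi1 hi2 j hj1 hj2
            rw [hk0] at hj2
            have hjK : j ≤ K := by omega
            have hj1' : 1 ≤ j := by omega
            have heq : (B j).filter (fun v => ∀ u ∈ B 0, ¬ G.Adj u v) = B j := by
              apply Finset.filter_true_of_mem
              intro x hx u hu
              intro hadj
              exact anticom j hj1' hjK u hu x hx hadj
            rw [heq]
            have h22 : ((r:ℝ)) ^ (2*1-2) = 1 := by norm_num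
            rw [h22]
            calc (1:ℝ) * ε * n = ε * n := by ring
              _ ≤ ((B j).card : ℝ) := hblock j hj1' hjK
      · -- inductive step, L ≥ 1
        -- ℕ arithmetic setup
        have hkL : k = r ^ L - 1 := by simpa using hk
        have ha3 : 3 ≤ r ^ L := by
          have h1 : r ≤ r ^ L := Nat.le_self_pow (by omega) r
          omega
        have hak : r ^ L = k + 1 := by omega
        have haK : K = r * r ^ L - 1 := by
          rw [hK, pow_succ]
          ring_nf
        have hRAk : r * r ^ L = r * k + r := by rw [hak]; ring
        have hkpos : 2 ≤ k := by omega
        have hrk9 : 3 * k ≤ r * k := by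
          exact Nat.mul_le_mul_right k hr3
        have hKbig : k + 1 ≤ K := by omega
        -- M and Q
        have hM2 : (r - 2) + 2 = r := by omega
        have hpowle : r ^ (2*L) ≤ r ^ (2*L+2) := Nat.pow_le_pow_right (by omega) (by omega)
        have hQR : ((r ^ (2*L+2) - r ^ (2*L) : ℕ):ℝ) = (r:ℝ)^(2*L+2) - (r:ℝ)^(2*L) := by
          rw [Nat.cast_sub hpowle]
          push_cast
          ring
        have haa : r ^ (2*L) = r ^ L * r ^ L := by
          rw [two_mul, pow_add]
        have haa2 : r ^ (2*L+2) = (r ^ L * r ^ L) * (r * r) := by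
          rw [pow_add, ← haa]
          ring
        have h9aa : 9 * (r ^ L * r ^ L) ≤ (r ^ L * r ^ L) * (r * r) := by
          have h99 : 9 ≤ r * r := by nlinarith
          calc 9 * (r ^ L * r ^ L) = (r ^ L * r ^ L) * 9 := by ring
            _ ≤ (r ^ L * r ^ L) * (r * r) := Nat.mul_le_mul_left _ h99
        have haaa : k + 1 ≤ r ^ L * r ^ L := by
          have := Nat.le_mul_of_pos_left (r ^ L) (show 0 < r ^ L by omega)
          omega
        have h2kQ : 2 * k ≤ r ^ (2*L+2) - r ^ (2*L) := by
          rw [haa2, haa]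
          omega
        have hkQ : k ≤ r ^ (2*L+2) - r ^ (2*L) := by omega
        have hQpos : 1 ≤ r ^ (2*L+2) - r ^ (2*L) := by omega
        -- real facts
        have hn1c : n ^ (1-c) ≤ n := by
          calc n ^ (1-c) ≤ n ^ (1:ℝ) :=
                Real.rpow_le_rpow_of_exponent_le hn1 (by linarith)
            _ = n := Real.rpow_one n
        have hnc1 : (1:ℝ) ≤ n ^ c := by
          calc (1:ℝ) = n ^ (0:ℝ) := (Real.rpow_zero n).symm
            _ ≤ n ^ c := Real.rpow_le_rpow_of_exponent_le hn1 (le_of_lt hc)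
        have hpowsum : n ^ c * n ^ (1-c) = n := by
          rw [← Real.rpow_add hn0, show c + (1-c) = 1 by ring, Real.rpow_one]
        have hBiR : ∀ i, 1 ≤ i → i ≤ K → (r:ℝ)^(2*L+2) * (ε*n) ≤ ((B i).card : ℝ) := by
          intro i h1 h2
          have h3 := hBi i h1 h2
          have he : 2*(L+1) = 2*L+2 := by ring
          rw [he] at h3
          linarith
        have hQX : ((r ^ (2*L+2) - r ^ (2*L) : ℕ):ℝ)*(ε*n)
            = (r:ℝ)^(2*L+2)*(ε*n) - (r:ℝ)^(2*L)*(ε*n) := by rw [hQR]; ring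
        -- attachment counting
        have attdeg : ∀ (S : Finset V) (j : ℕ),
            (((B j).filter (fun x => ∃ u ∈ S, G.Adj u x)).card : ℝ) ≤ (S.card:ℝ) * (ε*n) := by
          intro S j
          have hsub : (B j).filter (fun x => ∃ u ∈ S, G.Adj u x)
              ⊆ S.biUnion (fun u => G.neighborFinset u) := by
            intro x hx
            rw [mem_filter] at hx
            obtain ⟨-, u, huS, hadj⟩ := hx
            refine mem_biUnion.2 ⟨u, huS, ?_⟩
            rw [SimpleGraph.mem_neighborFinset]
            exact hadj
          have h1 : ((B j).filter (fun x => ∃ u ∈ S, G.Adj u x)).card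
              ≤ ∑ u ∈ S, (G.neighborFinset u).card :=
            le_trans (card_le_card hsub) (card_biUnion_le)
          have h2 : (∑ u ∈ S, ((G.neighborFinset u).card :ℝ)) ≤ ∑ u ∈ S, ε * n := by
            apply sum_le_sum
            intro u _
            have h4 := hsparse u
            rw [SimpleGraph.degree] at h4
            exact le_of_lt h4
          calc (((B j).filter (fun x => ∃ u ∈ S, G.Adj u x)).card : ℝ)
              ≤ (∑ u ∈ S, ((G.neighborFinset u).card:ℝ)) := by exact_mod_cast h1
            _ ≤ ∑ u ∈ S, ε * n := h2
            _ = S.card * (ε * n) := by rw [sum_const, nsmul_eq_mul]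
        -- complement split
        have hsplit : ∀ (S : Finset V) (j : ℕ),
            (((B j).filter (fun x => ∀ u ∈ S, ¬ G.Adj u x)).card : ℝ)
              = ((B j).card : ℝ) - (((B j).filter (fun x => ∃ u ∈ S, G.Adj u x)).card : ℝ) := by
          intro S j
          have h1 := Finset.card_filter_add_card_filter_not
            (s := B j) (p := fun x => ∀ u ∈ S, ¬ G.Adj u x)
          have h2 : (B j).filter (fun x => ¬ ∀ u ∈ S, ¬ G.Adj u x)
              = (B j).filter (fun x => ∃ u ∈ S, G.Adj u x) := by
            apply filter_congr
            intro x _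
            constructor
            · intro h
              push_neg at h
              exact h
            · intro h hall
              obtain ⟨u, hu, hadj⟩ := h
              exact hall u hu hadj
          rw [h2] at h1
          have h3 : (((B j).filter (fun x => ∀ u ∈ S, ¬ G.Adj u x)).card : ℝ)
              + (((B j).filter (fun x => ∃ u ∈ S, G.Adj u x)).card : ℝ) = ((B j).card : ℝ) := by
            exact_mod_cast h1
          linarith
        -- THE CORE LEMMA
        have core : ∀ S : Finset V, S ⊆ B 0 → ∀ j, 1 ≤ j → j + k ≤ K →
            (∀ m', 1 ≤ m' → m' ≤ k →
              (((B (j+m')).filter (fun x => ∃ u ∈ S, G.Adj u x)).card : ℝ)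
                ≤ ((r ^ (2*L+2) - r ^ (2*L) : ℕ):ℝ) * (ε*n)) →
            (((B j).filter (fun x => ∃ u ∈ S, G.Adj u x)).card : ℝ)
              ≤ (k:ℝ) * (ε * n ^ (1-c)) := by
          intro S hS j hj1 hjk hrem
          by_cases hne : ((B j).filter (fun x => ∃ u ∈ S, G.Adj u x)).Nonempty
          case neg =>
            rw [not_nonempty_iff_eq_empty] at hne
            rw [hne]
            simp only [card_empty, Nat.cast_zero]
            positivity
          case pos =>
          set Bf : ℕ → Finset V := fun m => if m = 0 then (B j).filter (fun x => ∃ u ∈ S, G.Adj u x)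
            else (B (j + m)).filter (fun x => ∀ u ∈ S, ¬ G.Adj u x) with hBfdef
          have hsubBf : ∀ m, Bf m ⊆ B (if m = 0 then j else j + m) := by
            intro m
            rw [hBfdef]
            beta_reduce
            by_cases hm : m = 0
            · rw [if_pos hm, if_pos hm]
              exact filter_subset _ _
            · rw [if_neg hm, if_neg hm]
              exact filter_subset _ _
          have hd : ∀ i1 i2, i1 ≤ k → i2 ≤ k → i1 ≠ i2 → Disjoint (Bf i1) (Bf i2) := by
            intro i1 i2 h1 h2 h12
            have idx1 : (if i1 = 0 then j else j + i1) ≤ K := by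
              by_cases a1 : i1 = 0 <;> simp [a1] <;> omega
            have idx2 : (if i2 = 0 then j else j + i2) ≤ K := by
              by_cases a2 : i2 = 0 <;> simp [a2] <;> omega
            have idxne : (if i1 = 0 then j else j + i1) ≠ (if i2 = 0 then j else j + i2) := by
              by_cases a1 : i1 = 0 <;> by_cases a2 : i2 = 0 <;> simp [a1, a2] <;> omega
            exact Finset.disjoint_of_subset_left (hsubBf i1)
              (Finset.disjoint_of_subset_right (hsubBf i2) (hdisj _ _ idx1 idx2 idxne))
          have hb0 : (Bf 0).Nonempty := by
            rw [hBfdef]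
            simpa using hne
          have hbi : ∀ i, 1 ≤ i → i ≤ k → ((r : ℝ) ^ (2 * L)) * ε * Fintype.card V ≤ ((Bf i).card : ℝ) := by
            intro i h1 h2
            rw [hBfdef]
            beta_reduce
            rw [if_neg (by omega : ¬ i = 0)]
            have h5 := hsplit S (j+i)
            have h6 := hBiR (j+i) (by omega) (by omega)
            have h7 := hrem i h1 h2
            have hgoal : ((r : ℝ) ^ (2 * L)) * ε * (Fintype.card V : ℝ) = (r:ℝ)^(2*L) * (ε * n) := by
              rw [← hn]; ring
            rw [hgoal]
            linarith
          rcases ih hL1 k (r ^ (L-1) - 1) Bf hkL rfl hd hb0 hbi with hp | hcov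
          · exfalso
            apply hpath
            apply prepend_path G L K k j hL1 hj1 hjk B S hS hdisj
            rw [hBfdef] at hp
            exact hp
          · have h1 := hcov.1
            rw [hBfdef] at h1
            simp only [↓reduceIte] at h1
            rw [← hn] at h1
            linarith
        -- q and the amplification
        set q := Nat.ceil (((r ^ (2*L+2) - r ^ (2*L) : ℕ):ℝ) * n ^ c / (2*k)) with hqdef
        have hkR : (0:ℝ) < (k:ℝ) := by exact_mod_cast (by omega : 0 < k)
        have hQR0 : (0:ℝ) < ((r ^ (2*L+2) - r ^ (2*L) : ℕ):ℝ) := by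
          exact_mod_cast (by omega : 0 < r ^ (2*L+2) - r ^ (2*L))
        have h2kR : 2 * (k:ℝ) ≤ ((r ^ (2*L+2) - r ^ (2*L) : ℕ):ℝ) := by
          exact_mod_cast h2kQ
        have h2k0 : (0:ℝ) < 2 * (k:ℝ) := by linarith
        have hhalf : (1:ℝ) ≤ ((r ^ (2*L+2) - r ^ (2*L) : ℕ):ℝ) * n ^ c / (2*k) := by
          rw [le_div_iff₀ h2k0]
          nlinarith [hnc1, hQR0]
        have hqlow : ((r ^ (2*L+2) - r ^ (2*L) : ℕ):ℝ) * n ^ c / (2*k) ≤ (q:ℝ) := Nat.le_ceil _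
        have hqup : (q:ℝ) ≤ ((r ^ (2*L+2) - r ^ (2*L) : ℕ):ℝ) * n ^ c / (k:ℝ) := by
          have h1 : (q:ℝ) < ((r ^ (2*L+2) - r ^ (2*L) : ℕ):ℝ) * n ^ c / (2*k) + 1 :=
            Nat.ceil_lt_add_one (by positivity)
          have h3 : 2 * (((r ^ (2*L+2) - r ^ (2*L) : ℕ):ℝ)*n^c/(2*k))
              = ((r ^ (2*L+2) - r ^ (2*L) : ℕ):ℝ)*n^c/(k:ℝ) := by
            field_simp
          linarith
        have hqkey : (q:ℝ) * ((k:ℝ) * (ε * n ^ (1-c)))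
            ≤ ((r ^ (2*L+2) - r ^ (2*L) : ℕ):ℝ) * (ε*n) := by
          have h1 : (q:ℝ) * ((k:ℝ)*(ε * n^(1-c)))
              ≤ (((r ^ (2*L+2) - r ^ (2*L) : ℕ):ℝ)*n^c/(k:ℝ)) * ((k:ℝ)*(ε*n^(1-c))) :=
            mul_le_mul_of_nonneg_right hqup (by positivity)
          have h2 : (((r ^ (2*L+2) - r ^ (2*L) : ℕ):ℝ)*n^c/(k:ℝ)) * ((k:ℝ)*(ε*n^(1-c)))
              = ((r ^ (2*L+2) - r ^ (2*L) : ℕ):ℝ) * (ε * (n^c * n^(1-c))) := by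
            field_simp
          rw [h2, hpowsum] at h1
          exact h1
        -- the amplified bound
        have D : ∀ m : ℕ, ∀ S : Finset V, S ⊆ B 0 →
            S.card ≤ (r ^ (2*L+2) - r ^ (2*L)) * q ^ m → ∀ j, 1 ≤ j →
            j + (m+1)*k ≤ K →
            (((B j).filter (fun x => ∃ u ∈ S, G.Adj u x)).card : ℝ)
              ≤ (k:ℝ) * (ε * n ^ (1-c)) := by
          intro m
          induction m with
          | zero =>
              intro S hS hcard j h1 h2
              have hmul : (0+1)*k = k := by ring
              apply core S hS j h1 (by omega)
              intro m' hm1 hm2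
              have h3 := attdeg S (j+m')
              have h4 : (S.card:ℝ) ≤ ((r ^ (2*L+2) - r ^ (2*L) : ℕ):ℝ) := by
                exact_mod_cast (by simpa using hcard)
              nlinarith [hεn]
          | succ m ihm =>
              have chunk : ∀ N : ℕ, ∀ S : Finset V, S ⊆ B 0 →
                  S.card ≤ N * ((r ^ (2*L+2) - r ^ (2*L)) * q ^ m) → ∀ j, 1 ≤ j →
                  j + (m+1)*k ≤ K →
                  (((B j).filter (fun x => ∃ u ∈ S, G.Adj u x)).card : ℝ)
                    ≤ (N:ℝ) * ((k:ℝ) * (ε * n ^ (1-c))) := by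
                intro N
                induction N with
                | zero =>
                    intro S hS hcard j h1 h2
                    have hSempty : S = ∅ := card_eq_zero.1 (by omega)
                    subst hSempty
                    simp
                | succ N ihN =>
                    intro S hS hcard j h1 h2
                    by_cases hsmall : S.card ≤ (r ^ (2*L+2) - r ^ (2*L)) * q ^ m
                    · have h3 := ihm S hS hsmall j h1 h2
                      have h4 : (0:ℝ) ≤ (k:ℝ)*(ε*n^(1-c)) := by positivity
                      have h5 : (1:ℝ) ≤ (N:ℝ) + 1 := by
                        have := Nat.cast_nonneg (α := ℝ) N
                        linarith
                      push_cast
                      nlinarith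
                    · obtain ⟨T, hTsub, hTcard⟩ :=
                        Finset.exists_subset_card_eq (s := S) (n := (r ^ (2*L+2) - r ^ (2*L)) * q ^ m) (by omega)
                      have hsubU : (B j).filter (fun x => ∃ u ∈ S, G.Adj u x)
                          ⊆ ((B j).filter (fun x => ∃ u ∈ T, G.Adj u x))
                            ∪ ((B j).filter (fun x => ∃ u ∈ S \ T, G.Adj u x)) := by
                        intro x hx
                        rw [mem_filter] at hx
                        obtain ⟨hxB, u, huS, hadj⟩ := hx
                        by_cases huT : u ∈ T
                        · exact mem_union_left _ (mem_filter.2 ⟨hxB, u, huT, hadj⟩)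
                        · exact mem_union_right _
                            (mem_filter.2 ⟨hxB, u, mem_sdiff.2 ⟨huS, huT⟩, hadj⟩)
                      have hcardle := (card_le_card hsubU).trans (card_union_le _ _)
                      have hT := ihm T (hTsub.trans hS) (le_of_eq hTcard) j h1 h2
                      have hST := ihN (S \ T) ((sdiff_subset).trans hS)
                          (by
                            rw [card_sdiff_of_subset hTsub, hTcard]
                            have hmul : (N+1) * ((r ^ (2*L+2) - r ^ (2*L)) * q ^ m)
                                = N * ((r ^ (2*L+2) - r ^ (2*L)) * q ^ m)
                                  + ((r ^ (2*L+2) - r ^ (2*L)) * q ^ m) := by ring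
                            omega) j h1 h2
                      have hcast : (((B j).filter (fun x => ∃ u ∈ S, G.Adj u x)).card : ℝ)
                          ≤ (((B j).filter (fun x => ∃ u ∈ T, G.Adj u x)).card : ℝ)
                            + (((B j).filter (fun x => ∃ u ∈ S \ T, G.Adj u x)).card : ℝ) := by
                        exact_mod_cast hcardle
                      push_cast
                      linarith
              intro S hS hcard j h1 h2
              have hmul : (m+1+1)*k = (m+1)*k + k := by ring
              apply core S hS j h1 (by omega)
              intro m' hm1 hm2
              have hcard' : S.card ≤ q * ((r ^ (2*L+2) - r ^ (2*L)) * q ^ m) := by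
                have heq : (r ^ (2*L+2) - r ^ (2*L)) * q ^ (m+1)
                    = q * ((r ^ (2*L+2) - r ^ (2*L)) * q ^ m) := by ring
                omega
              have h3 := chunk q S hS hcard' (j+m') (by omega) (by omega)
              linarith [hqkey]
        -- final attachment bound for B 0 itself
        have hq1 : 1 ≤ q := by
          have h1 : (1:ℝ) ≤ (q:ℝ) := le_trans hhalf hqlow
          exact_mod_cast h1
        have hqnc : n ^ c ≤ (q:ℝ) := by
          refine le_trans ?_ hqlow
          rw [le_div_iff₀ (by positivity)]
          nlinarith [Real.rpow_nonneg (le_of_lt hn0) c, hnc1]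
        have hMcast : ((r - 2 : ℕ):ℝ) = (r:ℝ) - 2 := by
          rw [Nat.cast_sub (by omega : 2 ≤ r)]
          norm_num
        have hcM : c * ((r - 2 : ℕ):ℝ) = 1 := by
          rw [hMcast]
          have h1 : (r:ℝ) - 2 = 1/c := by linarith [hr]
          rw [h1]
          field_simp
        have hpowM : (n ^ c) ^ (r - 2 : ℕ) = n := by
          rw [← Real.rpow_natCast (n ^ c) (r-2), ← Real.rpow_mul (le_of_lt hn0)]
          rw [hcM, Real.rpow_one]
        have hcardB0 : (B 0).card ≤ (r ^ (2*L+2) - r ^ (2*L)) * q ^ (r - 2) := by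
          have h1 : ((B 0).card : ℝ) ≤ n := by
            rw [hn]
            exact_mod_cast le_trans (card_le_univ _) (le_of_eq card_univ)
          have h3 : (n ^ c) ^ (r-2) ≤ (q:ℝ)^(r-2) := pow_le_pow_left₀ (by positivity) hqnc _
          have h4 : n ≤ (q:ℝ)^(r-2) := by rw [← hpowM]; exact h3
          have hQ1 : (1:ℝ) ≤ ((r ^ (2*L+2) - r ^ (2*L) : ℕ):ℝ) := by exact_mod_cast hQpos
          have h5 : ((B 0).card : ℝ) ≤ ((r ^ (2*L+2) - r ^ (2*L) : ℕ):ℝ) * (q:ℝ)^(r-2) := by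
            calc ((B 0).card : ℝ) ≤ n := h1
              _ ≤ (q:ℝ)^(r-2) := h4
              _ = 1 * (q:ℝ)^(r-2) := by ring
              _ ≤ ((r ^ (2*L+2) - r ^ (2*L) : ℕ):ℝ) * (q:ℝ)^(r-2) :=
                  mul_le_mul_of_nonneg_right hQ1 (by positivity)
          exact_mod_cast h5
        have hfinal : ∀ j, 1 ≤ j → j ≤ k+1 →
            (((B j).filter (fun x => ∃ u ∈ B 0, G.Adj u x)).card : ℝ)
              ≤ (k:ℝ) * (ε * n ^ (1-c)) := by
          intro j h1 h2
          apply D (r-2) (B 0) (subset_refl _) hcardB0 j h1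
          have hmul1 : ((r-2)+1)*k + k = ((r-2)+2)*k := by ring
          have hmul2 : ((r-2)+2)*k = r * k := by rw [hM2]
          omega
        have hkQx : (k:ℝ) * (ε * n^(1-c)) ≤ ((r ^ (2*L+2) - r ^ (2*L) : ℕ):ℝ)*(ε*n) := by
          have hkQcast : (k:ℝ) ≤ ((r ^ (2*L+2) - r ^ (2*L) : ℕ):ℝ) := by exact_mod_cast hkQ
          have h1 : ε * n^(1-c) ≤ ε * n := mul_le_mul_of_nonneg_left hn1c (le_of_lt hε0)
          calc (k:ℝ)*(ε*n^(1-c)) ≤ (k:ℝ)*(ε*n) :=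
                mul_le_mul_of_nonneg_left h1 (le_of_lt hkR)
            _ ≤ ((r ^ (2*L+2) - r ^ (2*L) : ℕ):ℝ)*(ε*n) :=
                mul_le_mul_of_nonneg_right hkQcast (le_of_lt hεn)
        have hNoAtt : ∀ j, 1 ≤ j → j ≤ k+1 →
            (r:ℝ)^(2*L) * (ε*n) ≤ (((B j).filter (fun x => ∀ u ∈ B 0, ¬ G.Adj u x)).card : ℝ) := by
          intro j h1 h2
          have h5 := hsplit (B 0) j
          have h6 := hBiR j h1 (by omega)
          have h7 := hfinal j h1 h2
          linarith
        have h1r2L : (1:ℝ) ≤ (r:ℝ)^(2*L) := one_le_pow₀ hrR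
        constructor
        · by_cases hbig : ε * n ^ (1 - c) ≤ ((B 0).card : ℝ)
          · exfalso
            apply hcoherent
            refine ⟨B 0, (B 1).filter (fun x => ∀ u ∈ B 0, ¬ G.Adj u x), ?_, ?_, hbig, ?_⟩
            · exact Finset.disjoint_of_subset_right (filter_subset _ _)
                (hdisj 0 1 (by omega) (by omega) (by omega))
            · intro x hx y hy
              exact (mem_filter.1 hy).2 x hx
            · have h8 := hNoAtt 1 le_rfl (by omega)
              nlinarith [hεn]
          · push_neg at hbig
            have hK1 : (1:ℝ) ≤ (K:ℝ) := by exact_mod_cast (by omega : 1 ≤ K)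
            calc ((B 0).card : ℝ) ≤ ε * n ^ (1-c) := le_of_lt hbig
              _ = 1 * (ε * n ^ (1-c)) := by ring
              _ ≤ (K:ℝ) * (ε * n ^ (1-c)) := mul_le_mul_of_nonneg_right hK1 (le_of_lt hx0)
              _ = (K:ℝ) * ε * n ^ (1-c) := by ring
        · refine ⟨fun i => if i = 1 then B 0 else ∅, ?_, ?_⟩
          · ext x
            simp only [mem_biUnion, mem_Icc]
            constructor
            · intro hx
              exact ⟨1, ⟨le_rfl, by omega⟩, by simpa using hx⟩
            · rintro ⟨i, hi, hx⟩
              by_cases h : i = 1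
              · subst h
                simpa using hx
              · rw [if_neg h] at hx
                exact absurd hx (notMem_empty x)
          · intro i hi1 hi2 j hj1 hj2
            have hgoalpow : (2*(L+1) - 2) = 2*L := by omega
            rw [hgoalpow]
            by_cases hi : i = 1
            · subst hi
              simp only [↓reduceIte]
              have h8 := hNoAtt j (by omega) (by omega)
              rw [← hn]
              linarith
            · beta_reduce
              rw [if_neg hi]
              have heq : (B j).filter (fun v => ∀ u ∈ (∅:Finset V), ¬ G.Adj u v) = B j := by
                apply filter_true_of_mem
                intro x hx u hu
                exact absurd hu (notMem_empty u)
              rw [heq]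
              have hjK : j ≤ K := by omega
              have h6 := hBiR j (by omega) hjK
              have hple : (r:ℝ)^(2*L) ≤ (r:ℝ)^(2*L+2) := by
                calc (r:ℝ)^(2*L) = (r:ℝ)^(2*L) * 1 := by ring
                  _ ≤ (r:ℝ)^(2*L) * (r:ℝ)^2 := by
                      apply mul_le_mul_of_nonneg_left (one_le_pow₀ hrR) (by positivity)
                  _ = (r:ℝ)^(2*L+2) := by rw [pow_add]
              rw [← hn]
              nlinarith [hεn]

end main


/-- the key lemma towards the pathfinder. -/
theorem stmt_9 {V : Type} [Fintype V] [DecidableEq V] (G : SimpleGraph V) [DecidableRel G.Adj]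
    (c : ℝ) (hc : 0 < c) (r : ℕ) (hr : (r : ℝ) = 2 + 1 / c)
    (ℓ : ℕ) (hℓ : 1 ≤ ℓ) (K k : ℕ) (hK : K = r ^ ℓ - 1) (hk : k = r ^ (ℓ - 1) - 1)
    (ε : ℝ) (hε0 : 0 < ε)
    (hsparse : ∀ v : V, (G.degree v : ℝ) < ε * Fintype.card V)
    (hcoherent : ¬ ∃ A B : Finset V, Disjoint A B ∧
      (∀ a ∈ A, ∀ b ∈ B, ¬ G.Adj a b) ∧
      ε * (Fintype.card V : ℝ) ^ (1 - c) ≤ (A.card : ℝ) ∧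
      ε * Fintype.card V ≤ (B.card : ℝ))
    (B : ℕ → Finset V)
    (hdisj : ∀ i j, i ≤ K → j ≤ K → i ≠ j → Disjoint (B i) (B j))
    (hB0 : (B 0).Nonempty)
    (hBi : ∀ i, 1 ≤ i → i ≤ K →
      ((r : ℝ) ^ (2 * ℓ)) * ε * Fintype.card V ≤ ((B i).card : ℝ)) :
    (∃ (p : ℕ → V) (t : ℕ → ℕ),
      (∀ i ≤ ℓ, ∀ j ≤ ℓ, (G.Adj (p i) (p j) ↔ (i = j + 1 ∨ j = i + 1))) ∧
      (∀ i ≤ ℓ, ∀ j ≤ ℓ, p i = p j → i = j) ∧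
      (∀ i, 1 ≤ i → i < ℓ → t i < t (i + 1)) ∧
      1 ≤ t 1 ∧ t ℓ ≤ K ∧ p 0 ∈ B 0 ∧
      (∀ i, 1 ≤ i → i ≤ ℓ → p i ∈ B (t i))) ∨
    (((B 0).card : ℝ) ≤ (K : ℝ) * ε * (Fintype.card V : ℝ) ^ (1 - c) ∧
      ∃ C : ℕ → Finset V,
        B 0 = (Finset.Icc 1 (K - k)).biUnion C ∧
        ∀ i, 1 ≤ i → i ≤ K - k → ∀ j, i ≤ j → j ≤ i + k →
          ((r : ℝ) ^ (2 * ℓ - 2)) * ε * Fintype.card V ≤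
            (((B j).filter (fun v => ∀ u ∈ C i, ¬ G.Adj u v)).card : ℝ)) := by
  exact pathfinder_aux G c hc r hr ε hε0 hsparse hcoherent ℓ hℓ K k B hK hk hdisj hB0 hBi
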